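/- Under the Setup: let (gₙ) be a sequence of pairwise disjoint (gₙ·gₘ = 0 for n ≠ m) norm-one functions in C(K), let (xₙ) be a sequence of points which is dense in K, and for each n let θₙ be a bounded linear functional on C(K) with ‖θₙ‖ = 1 and θₙ(z) = 0 for all z ∈ Z. Then: (a) Λ(f) := (f(xₙ)·1_K)_{n∈ℕ} defines a bounded linear operator Λ : C(K) → X₊; (b) for every (fₙ) ∈ X₊ the series Σₙ θₙ(fₙ)·gₙ converges in C(K), and Θ((fₙ)) := Σₙ θₙ(fₙ)·gₙ defines a bounded linear operator Θ : X₊ → C(K) whose range is a subspace of C(K) isomorphic to c₀; consequently X₊ contains a complemented subspace isomorphic to c₀ and X₊ is not a Grothendieck space. -/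

import Mathlib

open Filter Metric Topology BoundedContinuousFunction

set_option maxHeartbeats 1000000
set_option synthInstance.maxHeartbeats 400000

noncomputable section

/-- A bounded linear operator is weakly compact if the norm-closure of the image of the
closed unit ball is compact in the weak topology. -/
def IsWeaklyCompactOp {E F : Type*} [NormedAddCommGroup E] [NormedSpace ℝ E]
    [NormedAddCommGroup F] [NormedSpace ℝ F] (T : E →L[ℝ] F) : Prop :=
  IsCompact (toWeakSpace ℝ F '' closure (T '' Metric.closedBall 0 1))

/-- A sequence generates a copy of `c₀` if it is equivalent to the standard basis of `c₀`. -/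
def GeneratesC0 {X : Type*} [NormedAddCommGroup X] [NormedSpace ℝ X] (f : ℕ → X) : Prop :=
  ∃ c C : ℝ, 0 < c ∧ c ≤ C ∧ ∀ α : ℕ →₀ ℝ,
    c * (⨆ m, |α m|) ≤ ‖α.sum fun m a => a • f m‖ ∧
      ‖α.sum fun m a => a • f m‖ ≤ C * (⨆ m, |α m|)

/-- The closed linear span of the characteristic functions of the members of a family
`Cal` of (clopen) subsets of `K`. -/
def Zspan (K : Type*) [TopologicalSpace K] [CompactSpace K] (Cal : Set (Set K)) :
    Submodule ℝ C(K, ℝ) :=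
  (Submodule.span ℝ {g : C(K, ℝ) | ∃ b ∈ Cal, ∀ x, g x = Set.indicator b (fun _ => (1 : ℝ)) x}).topologicalClosure

section aux

variable {E : Type*} [NormedAddCommGroup E] [NormedSpace ℝ E]

lemma infDist_add_le' (Z : Submodule ℝ E) (x y : E) :
    Metric.infDist (x + y) (Z : Set E) ≤
      Metric.infDist x (Z : Set E) + Metric.infDist y (Z : Set E) := by
  have hne : (Z : Set E).Nonempty := ⟨0, Z.zero_mem⟩
  by_contra h
  push_neg at h
  set ε := (Metric.infDist (x + y) (Z : Set E) -
    (Metric.infDist x (Z : Set E) + Metric.infDist y (Z : Set E))) with hε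
  have hεpos : 0 < ε := by simp [hε]; linarith
  obtain ⟨z, hz, hxz⟩ := (Metric.infDist_lt_iff hne).mp
    (lt_add_of_pos_right (Metric.infDist x (Z : Set E)) (half_pos hεpos))
  obtain ⟨w, hw, hyw⟩ := (Metric.infDist_lt_iff hne).mp
    (lt_add_of_pos_right (Metric.infDist y (Z : Set E)) (half_pos hεpos))
  have hle : Metric.infDist (x + y) (Z : Set E) ≤ dist (x + y) (z + w) :=
    Metric.infDist_le_dist_of_mem (Z.add_mem hz hw)
  have htri : dist (x + y) (z + w) ≤ dist x z + dist y w := by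
    simpa [dist_eq_norm, add_sub_add_comm] using norm_add_le (x - z) (y - w)
  linarith

lemma infDist_smul_le' (c : ℝ) (Z : Submodule ℝ E) (x : E) :
    Metric.infDist (c • x) (Z : Set E) ≤ (|c| + 1) * Metric.infDist x (Z : Set E) := by
  have hne : (Z : Set E).Nonempty := ⟨0, Z.zero_mem⟩
  by_contra h
  push_neg at h
  have h0 : 0 ≤ Metric.infDist x (Z : Set E) := Metric.infDist_nonneg
  have hεpos : 0 < (Metric.infDist (c • x) (Z : Set E) -
      (|c| + 1) * Metric.infDist x (Z : Set E)) / (|c| + 1) := by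
    have : (0:ℝ) < |c| + 1 := by positivity
    apply div_pos _ this
    linarith
  obtain ⟨z, hz, hxz⟩ := (Metric.infDist_lt_iff hne).mp
    (lt_add_of_pos_right (Metric.infDist x (Z : Set E)) hεpos)
  have hle : Metric.infDist (c • x) (Z : Set E) ≤ dist (c • x) (c • z) :=
    Metric.infDist_le_dist_of_mem (Z.smul_mem c hz)
  have heq : dist (c • x) (c • z) = |c| * dist x z := by
    simp [dist_eq_norm, ← smul_sub, norm_smul, Real.norm_eq_abs]
  have hc1 : |c| ≤ |c| + 1 := by linarith
  have habs : (0:ℝ) ≤ |c| := abs_nonneg c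
  have hd : (0:ℝ) ≤ dist x z := dist_nonneg
  have : Metric.infDist (c • x) (Z : Set E) ≤ (|c| + 1) * dist x z := by
    calc Metric.infDist (c • x) (Z : Set E) ≤ |c| * dist x z := hle.trans_eq heq
    _ ≤ (|c| + 1) * dist x z := by nlinarith
  have hxz' : dist x z < Metric.infDist x (Z : Set E) +
      (Metric.infDist (c • x) (Z : Set E) - (|c| + 1) * Metric.infDist x (Z : Set E)) / (|c| + 1) := hxz
  have hpos : (0:ℝ) < |c| + 1 := by positivity
  rw [mul_comm] at this
  have := this.trans_lt (mul_lt_mul_of_pos_right hxz' hpos)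
  rw [add_mul, div_mul_cancel₀] at this
  · linarith
  · positivity

end aux

/-- The Banach space `X₊` of all bounded sequences `(fₙ)` in `C(K,ℝ)` with
`dist (fₙ, Z) → 0`, realized as a submodule of the space of bounded functions `ℕ →ᵇ C(K,ℝ)`. -/
def Xplus (K : Type*) [TopologicalSpace K] [CompactSpace K] (Cal : Set (Set K)) :
    Submodule ℝ (lp (fun _ : ℕ => C(K, ℝ)) ⊤) where
  carrier := {f | Tendsto (fun n => Metric.infDist (f n) ((Zspan K Cal : Submodule ℝ C(K, ℝ)) : Set C(K, ℝ))) atTop (𝓝 0)}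
  zero_mem' := by
    have h : (fun n : ℕ => Metric.infDist ((0 : lp (fun _ : ℕ => C(K, ℝ)) ⊤) n)
        ((Zspan K Cal : Submodule ℝ C(K,ℝ)) : Set C(K, ℝ))) = fun _ => (0:ℝ) := by
      funext n
      simp only [lp.coeFn_zero, Pi.zero_apply]
      exact Metric.infDist_zero_of_mem (Zspan K Cal).zero_mem
    simp only [Set.mem_setOf_eq, h]
    exact tendsto_const_nhds
  add_mem' := by
    intro f g hf hg
    simp only [Set.mem_setOf_eq] at hf hg ⊢
    have h0 : ∀ n, (0:ℝ) ≤ Metric.infDist ((f + g) n) ((Zspan K Cal : Submodule ℝ C(K,ℝ)) : Set C(K, ℝ)) :=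
      fun n => Metric.infDist_nonneg
    refine squeeze_zero h0 (fun n => ?_) (by simpa using hf.add hg)
    simpa using infDist_add_le' (Zspan K Cal) (f n) (g n)
  smul_mem' := by
    intro c f hf
    simp only [Set.mem_setOf_eq] at hf ⊢
    have h0 : ∀ n, (0:ℝ) ≤ Metric.infDist ((c • f) n) ((Zspan K Cal : Submodule ℝ C(K,ℝ)) : Set C(K, ℝ)) :=
      fun n => Metric.infDist_nonneg
    exact squeeze_zero h0
      (fun n => by simpa using infDist_smul_le' c (Zspan K Cal) (f n))
      (by simpa using hf.const_mul (|c| + 1))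

/-- The subspace `Y₊ = {(fₙ) ∈ X₊ : f₀ vanishes on K₁}`. -/
def Yplus (K : Type*) [TopologicalSpace K] [CompactSpace K] (Cal : Set (Set K))
    (K₁ : Set K) : Submodule ℝ ↥(Xplus K Cal) where
  carrier := {f | ∀ x ∈ K₁, ((f : lp (fun _ : ℕ => C(K, ℝ)) ⊤) 0) x = 0}
  zero_mem' := by intro x hx; simp
  add_mem' := by
    intro f g hf hg x hx
    have := hf x hx
    have := hg x hx
    simp_all
  smul_mem' := by
    intro c f hf x hx
    have := hf x hx
    simp_all

/-- The space `X₀` of sequences in `C(K,ℝ)` converging to `0` in norm. -/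
def Xzero (K : Type*) [TopologicalSpace K] [CompactSpace K] :
    Submodule ℝ (lp (fun _ : ℕ => C(K, ℝ)) ⊤) where
  carrier := {f | Tendsto (fun n => ‖f n‖) atTop (𝓝 0)}
  zero_mem' := by
    simp only [Set.mem_setOf_eq, lp.coeFn_zero, Pi.zero_apply, norm_zero]
    exact tendsto_const_nhds
  add_mem' := by
    intro f g hf hg
    simp only [Set.mem_setOf_eq] at hf hg ⊢
    refine squeeze_zero (fun n => norm_nonneg _) (fun n => ?_) (by simpa using hf.add hg)
    simpa using norm_add_le (f n) (g n)
  smul_mem' := by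
    intro c f hf
    simp only [Set.mem_setOf_eq] at hf ⊢
    refine squeeze_zero (fun n => norm_nonneg _) (fun n => ?_) (by simpa using hf.const_mul ‖c‖)
    simp [norm_smul]


/-- A Banach space is a Grothendieck space if every weak*-null sequence in its dual is weakly
null. -/
def IsGrothendieckSpace (X : Type*) [NormedAddCommGroup X] [NormedSpace ℝ X] : Prop :=
  ∀ φ : ℕ → (X →L[ℝ] ℝ), (∀ v : X, Tendsto (fun n => φ n v) atTop (𝓝 0)) →
    ∀ Ψ : (X →L[ℝ] ℝ) →L[ℝ] ℝ, Tendsto (fun n => Ψ (φ n)) atTop (𝓝 0)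

section series_helpers
set_option linter.unusedSectionVars false
variable {K : Type*} [TopologicalSpace K] [CompactSpace K]
variable {g : ℕ → C(K,ℝ)}

lemma g_eval_eq_zero (hgdisj : ∀ n m, n ≠ m → g n * g m = 0)
    {n m : ℕ} (h : n ≠ m) {x : K} (hx : g m x ≠ 0) : g n x = 0 := by
  have := congrArg (fun f : C(K,ℝ) => f x) (hgdisj n m h)
  simp only [ContinuousMap.mul_apply, ContinuousMap.zero_apply] at this
  rcases mul_eq_zero.mp this with h' | h'
  · exact h'
  · exact absurd h' hx

lemma norm_sum_g_le (hgdisj : ∀ n m, n ≠ m → g n * g m = 0)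
    (hgnorm : ∀ n, ‖g n‖ = 1)
    (a : ℕ → ℝ) (s : Finset ℕ) {b : ℝ} (hb : 0 ≤ b) (ha : ∀ n ∈ s, |a n| ≤ b) :
    ‖∑ n ∈ s, a n • g n‖ ≤ b := by
  rw [ContinuousMap.norm_le _ hb]
  intro x
  rw [show ((∑ n ∈ s, a n • g n) x) = ∑ n ∈ s, a n * g n x by simp]
  by_cases hx : ∃ m ∈ s, g m x ≠ 0
  · obtain ⟨m, hm, hmx⟩ := hx
    rw [Finset.sum_eq_single_of_mem m hm (fun n hn hne => by
      rw [g_eval_eq_zero hgdisj hne hmx, mul_zero])]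
    rw [Real.norm_eq_abs, abs_mul]
    calc |a m| * |g m x| ≤ b * 1 := by
          refine mul_le_mul (ha m hm) ?_ (abs_nonneg _) hb
          calc |g m x| ≤ ‖g m‖ := (g m).norm_coe_le_norm x
          _ = 1 := hgnorm m
    _ = b := mul_one b
  · push_neg at hx
    rw [Finset.sum_eq_zero (fun n hn => by rw [hx n hn, mul_zero])]
    simpa using hb

/-- the sum of the series `∑ aₙ gₙ`. -/
def sLim (g : ℕ → C(K,ℝ)) (a : ℕ → ℝ) : C(K,ℝ) :=
  limUnder atTop (fun N => ∑ n ∈ Finset.range N, a n • g n)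

lemma cauchy_partial (hgdisj : ∀ n m, n ≠ m → g n * g m = 0)
    (hgnorm : ∀ n, ‖g n‖ = 1) {a : ℕ → ℝ} (ha : Tendsto a atTop (𝓝 0)) :
    CauchySeq (fun N => ∑ n ∈ Finset.range N, a n • g n) := by
  rw [Metric.cauchySeq_iff']
  intro ε hε
  obtain ⟨N, hN⟩ := Metric.tendsto_atTop.mp ha (ε/2) (half_pos hε)
  refine ⟨N, fun n hn => ?_⟩
  rw [dist_eq_norm, ← Finset.sum_sdiff_eq_sub (Finset.range_subset_range.mpr hn)]
  refine lt_of_le_of_lt (norm_sum_g_le hgdisj hgnorm a _ (le_of_lt (half_pos hε))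
    (fun i hi => ?_)) (half_lt_self hε)
  have hiN : N ≤ i := by
    simp only [Finset.mem_sdiff, Finset.mem_range, not_lt] at hi
    exact hi.2
  have := hN i hiN
  rw [Real.dist_eq, sub_zero] at this; exact this.le

lemma tendsto_sLim (hgdisj : ∀ n m, n ≠ m → g n * g m = 0)
    (hgnorm : ∀ n, ‖g n‖ = 1) {a : ℕ → ℝ} (ha : Tendsto a atTop (𝓝 0)) :
    Tendsto (fun N => ∑ n ∈ Finset.range N, a n • g n) atTop (𝓝 (sLim g a)) :=
  (cauchy_partial hgdisj hgnorm ha).tendsto_limUnder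

lemma norm_sLim_le (hgdisj : ∀ n m, n ≠ m → g n * g m = 0)
    (hgnorm : ∀ n, ‖g n‖ = 1) {a : ℕ → ℝ} (ha : Tendsto a atTop (𝓝 0))
    {b : ℝ} (hb : 0 ≤ b) (hab : ∀ n, |a n| ≤ b) : ‖sLim g a‖ ≤ b := by
  refine le_of_tendsto (tendsto_sLim hgdisj hgnorm ha).norm
    (Eventually.of_forall fun N => ?_)
  exact norm_sum_g_le hgdisj hgnorm a _ hb (fun n _ => hab n)

lemma sLim_apply_of (hgdisj : ∀ n m, n ≠ m → g n * g m = 0)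
    (hgnorm : ∀ n, ‖g n‖ = 1) {a : ℕ → ℝ} (ha : Tendsto a atTop (𝓝 0))
    {m : ℕ} {x : K} (hmx : g m x ≠ 0) : sLim g a x = a m * g m x := by
  have h1 : Tendsto (fun N => (∑ n ∈ Finset.range N, a n • g n) x) atTop
      (𝓝 (sLim g a x)) :=
    ((continuous_eval_const x).tendsto _).comp (tendsto_sLim hgdisj hgnorm ha)
  have h2 : ∀ N, m + 1 ≤ N → (∑ n ∈ Finset.range N, a n • g n) x = a m * g m x := by
    intro N hN
    rw [show ((∑ n ∈ Finset.range N, a n • g n) x) = ∑ n ∈ Finset.range N, a n * g n x by simp]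
    exact Finset.sum_eq_single_of_mem m (Finset.mem_range.mpr hN)
      (fun n _ hne => by rw [g_eval_eq_zero hgdisj hne hmx, mul_zero])
  exact tendsto_nhds_unique h1 (Tendsto.congr'
    (eventually_atTop.mpr ⟨m + 1, fun N hN => (h2 N hN).symm⟩) tendsto_const_nhds)

lemma sLim_add (hgdisj : ∀ n m, n ≠ m → g n * g m = 0)
    (hgnorm : ∀ n, ‖g n‖ = 1) {a b : ℕ → ℝ} (ha : Tendsto a atTop (𝓝 0))
    (hb : Tendsto b atTop (𝓝 0)) : sLim g (a + b) = sLim g a + sLim g b := by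
  refine tendsto_nhds_unique (tendsto_sLim hgdisj hgnorm ?_)
    (((tendsto_sLim hgdisj hgnorm ha).add (tendsto_sLim hgdisj hgnorm hb)).congr
      (fun N => ?_))
  · have := ha.add hb; rw [add_zero] at this; exact this
  · rw [← Finset.sum_add_distrib]
    exact Finset.sum_congr rfl fun n _ => by simp [add_smul]

lemma sLim_smul (hgdisj : ∀ n m, n ≠ m → g n * g m = 0)
    (hgnorm : ∀ n, ‖g n‖ = 1) {a : ℕ → ℝ} (c : ℝ) (ha : Tendsto a atTop (𝓝 0)) :
    sLim g (c • a) = c • sLim g a := by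
  refine tendsto_nhds_unique (tendsto_sLim hgdisj hgnorm ?_)
    (((tendsto_sLim hgdisj hgnorm ha).const_smul c).congr (fun N => ?_))
  · have := ha.const_smul c; rw [smul_zero] at this; exact this
  · rw [Finset.smul_sum]
    exact Finset.sum_congr rfl fun n _ => by simp [smul_smul]

lemma norm_g_attained [Nonempty K] (hgnorm : ∀ n, ‖g n‖ = 1) (n : ℕ) :
    ∃ x : K, |g n x| = 1 ∧ g n x ≠ 0 := by
  obtain ⟨x₀, -, hx₀⟩ := isCompact_univ.exists_isMaxOn (Set.univ_nonempty)
    ((map_continuous (g n)).abs.continuousOn)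
  have hx₀ : ∀ y : K, |g n y| ≤ |g n x₀| := fun y => hx₀ (Set.mem_univ y)
  have h1 : ‖g n‖ ≤ |g n x₀| := by
    rw [ContinuousMap.norm_le _ (abs_nonneg _)]
    intro y
    simpa using hx₀ y
  have h2 : |g n x₀| ≤ 1 := by
    calc |g n x₀| ≤ ‖g n‖ := (g n).norm_coe_le_norm x₀
    _ = 1 := hgnorm n
  have h3 : |g n x₀| = 1 := le_antisymm h2 (by rw [← hgnorm n]; exact h1)
  exact ⟨x₀, h3, fun h => by rw [h] at h3; simp at h3⟩

open ZeroAtInfty in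
lemma c0_abs_apply_le_norm (a : C₀(ℕ, ℝ)) (n : ℕ) : |a n| ≤ ‖a‖ := by
  rw [← ZeroAtInftyContinuousMap.norm_toBCF_eq_norm]
  exact a.toBCF.norm_coe_le_norm n

open ZeroAtInfty in
lemma c0_tendsto (a : C₀(ℕ, ℝ)) : Tendsto (fun n => a n) atTop (𝓝 0) := by
  have := a.zero_at_infty'
  rwa [cocompact_eq_atTop] at this

open ZeroAtInfty in
lemma sLim_norm_eq [Nonempty K] (hgdisj : ∀ n m, n ≠ m → g n * g m = 0)
    (hgnorm : ∀ n, ‖g n‖ = 1) (a : C₀(ℕ, ℝ)) : ‖sLim g (fun n => a n)‖ = ‖a‖ := by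
  refine le_antisymm (norm_sLim_le hgdisj hgnorm (c0_tendsto a) (norm_nonneg a)
    (fun n => c0_abs_apply_le_norm a n)) ?_
  rw [← ZeroAtInftyContinuousMap.norm_toBCF_eq_norm,
    BoundedContinuousFunction.norm_le (norm_nonneg _)]
  intro n
  obtain ⟨x₀, hx1, hx2⟩ := norm_g_attained hgnorm n
  have := sLim_apply_of hgdisj hgnorm (c0_tendsto a) hx2
  calc ‖a.toBCF n‖ = |a n| * |g n x₀| := by
        rw [hx1, mul_one]; rfl
  _ = |sLim g (fun n => a n) x₀| := by rw [this, abs_mul]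
  _ ≤ ‖sLim g (fun n => a n)‖ := (sLim g _).norm_coe_le_norm x₀

end series_helpers

section xplus_helpers
set_option linter.unusedSectionVars false
open ZeroAtInfty
variable {K : Type*} [TopologicalSpace K] [CompactSpace K]

lemma abs_apply_le_infDist (Z : Submodule ℝ C(K,ℝ)) (φ : C(K,ℝ) →L[ℝ] ℝ)
    (hφ : ‖φ‖ ≤ 1) (h0 : ∀ z ∈ Z, φ z = 0) (f : C(K,ℝ)) :
    |φ f| ≤ Metric.infDist f (Z : Set C(K,ℝ)) := by
  by_contra hc
  push_neg at hc
  obtain ⟨z, hz, hdz⟩ := (Metric.infDist_lt_iff ⟨0, Z.zero_mem⟩).mp hc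
  have heq : |φ f| = |φ (f - z)| := by rw [map_sub, h0 z hz, sub_zero]
  have hle : |φ (f - z)| ≤ ‖f - z‖ := by
    calc |φ (f - z)| ≤ ‖φ‖ * ‖f - z‖ := φ.le_opNorm _
    _ ≤ 1 * ‖f - z‖ := by nlinarith [norm_nonneg (f - z)]
    _ = ‖f - z‖ := one_mul _
  rw [dist_eq_norm] at hdz
  rw [heq] at hc
  linarith

variable (Cal : Set (Set K))

lemma mem_Xplus_iff (f : lp (fun _ : ℕ => C(K, ℝ)) ⊤) : f ∈ Xplus K Cal ↔
    Tendsto (fun n => Metric.infDist (f n)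
      ((Zspan K Cal : Submodule ℝ C(K, ℝ)) : Set C(K, ℝ))) atTop (𝓝 0) := Iff.rfl

/-- Constructor for elements of `Xplus`. -/
def mkX (f : ℕ → C(K, ℝ)) (C : ℝ) (hC : ∀ n, ‖f n‖ ≤ C)
    (hd : Tendsto (fun n => Metric.infDist (f n)
      ((Zspan K Cal : Submodule ℝ C(K,ℝ)) : Set C(K,ℝ))) atTop (𝓝 0)) :
    ↥(Xplus K Cal) :=
  ⟨⟨f, memℓp_infty ⟨C, by rintro r ⟨n, rfl⟩; exact hC n⟩⟩, hd⟩

@[simp] lemma mkX_coe (f : ℕ → C(K, ℝ)) (C : ℝ) (hC) (hd) (n : ℕ) :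
    ((mkX Cal f C hC hd : ↥(Xplus K Cal)) : lp (fun _ : ℕ => C(K, ℝ)) ⊤) n = f n := rfl

lemma mkX_norm_le (f : ℕ → C(K, ℝ)) (C : ℝ) (hC) (hd) (h0 : 0 ≤ C) :
    ‖mkX Cal f C hC hd‖ ≤ C := by
  rw [Submodule.coe_norm]
  exact lp.norm_le_of_forall_le h0 hC

lemma Xp_ext {F G : ↥(Xplus K Cal)}
    (h : ∀ n, (F : lp (fun _ : ℕ => C(K, ℝ)) ⊤) n = (G : lp (fun _ : ℕ => C(K, ℝ)) ⊤) n) :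
    F = G := Subtype.ext (lp.ext (funext h))

lemma Xp_add_apply (F G : ↥(Xplus K Cal)) (n : ℕ) :
    ((F + G : ↥(Xplus K Cal)) : lp (fun _ : ℕ => C(K, ℝ)) ⊤) n
      = (F : lp (fun _ : ℕ => C(K, ℝ)) ⊤) n + (G : lp (fun _ : ℕ => C(K, ℝ)) ⊤) n :=
  congrFun (lp.coeFn_add (F : lp (fun _ : ℕ => C(K, ℝ)) ⊤) (G : lp _ ⊤)) n

lemma Xp_smul_apply (c : ℝ) (F : ↥(Xplus K Cal)) (n : ℕ) :
    ((c • F : ↥(Xplus K Cal)) : lp (fun _ : ℕ => C(K, ℝ)) ⊤) n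
      = c • ((F : lp (fun _ : ℕ => C(K, ℝ)) ⊤) n) :=
  congrFun (lp.coeFn_smul c (F : lp (fun _ : ℕ => C(K, ℝ)) ⊤)) n

lemma Xp_norm_apply_le (F : ↥(Xplus K Cal)) (n : ℕ) :
    ‖(F : lp (fun _ : ℕ => C(K, ℝ)) ⊤) n‖ ≤ ‖F‖ :=
  lp.norm_apply_le_norm ENNReal.top_ne_zero (F : lp (fun _ : ℕ => C(K, ℝ)) ⊤) n

variable (θ : ℕ → C(K,ℝ) →L[ℝ] ℝ)

lemma coeff_tendsto (hθn : ∀ n, ‖θ n‖ ≤ 1) (hθZ : ∀ n, ∀ z ∈ Zspan K Cal, θ n z = 0)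
    (F : ↥(Xplus K Cal)) :
    Tendsto (fun n => θ n ((F : lp (fun _ : ℕ => C(K,ℝ)) ⊤) n)) atTop (𝓝 0) := by
  have hF := (mem_Xplus_iff Cal (F : lp (fun _ : ℕ => C(K,ℝ)) ⊤)).mp F.2
  exact squeeze_zero_norm (fun n => abs_apply_le_infDist _ _ (hθn n) (hθZ n) _) hF

/-- The operator `Θ' : X₊ → C₀`. -/
def thetaC0 (hθn : ∀ n, ‖θ n‖ ≤ 1) (hθZ : ∀ n, ∀ z ∈ Zspan K Cal, θ n z = 0) :
    ↥(Xplus K Cal) →L[ℝ] C₀(ℕ, ℝ) :=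
  LinearMap.mkContinuous
    { toFun := fun F =>
        { toFun := fun n => θ n ((F : lp (fun _ : ℕ => C(K,ℝ)) ⊤) n)
          continuous_toFun := continuous_of_discreteTopology
          zero_at_infty' := by
            rw [cocompact_eq_atTop]
            exact coeff_tendsto Cal θ hθn hθZ F }
      map_add' := fun F G => by
        ext n
        simp only [ZeroAtInftyContinuousMap.coe_add, Pi.add_apply,
          ZeroAtInftyContinuousMap.coe_mk, ContinuousMap.coe_mk]
        rw [Xp_add_apply, map_add]
      map_smul' := fun c F => by
        ext n
        simp only [ZeroAtInftyContinuousMap.coe_smul, Pi.smul_apply,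
          ZeroAtInftyContinuousMap.coe_mk, ContinuousMap.coe_mk, RingHom.id_apply]
        rw [Xp_smul_apply, map_smul] }
    1 (fun F => by
      rw [one_mul, ← ZeroAtInftyContinuousMap.norm_toBCF_eq_norm,
        BoundedContinuousFunction.norm_le (norm_nonneg F)]
      intro n
      calc ‖θ n ((F : lp (fun _ : ℕ => C(K,ℝ)) ⊤) n)‖
          ≤ ‖θ n‖ * ‖(F : lp (fun _ : ℕ => C(K,ℝ)) ⊤) n‖ := (θ n).le_opNorm _
        _ ≤ 1 * ‖F‖ :=
            mul_le_mul (hθn n) (Xp_norm_apply_le Cal F n) (norm_nonneg _) zero_le_one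
        _ = ‖F‖ := one_mul _)

@[simp] lemma thetaC0_apply (hθn) (hθZ) (F : ↥(Xplus K Cal)) (n : ℕ) :
    thetaC0 Cal θ hθn hθZ F n = θ n ((F : lp (fun _ : ℕ => C(K,ℝ)) ⊤) n) := rfl

lemma exists_good_h (hθnorm : ∀ n, ‖θ n‖ = 1) (n : ℕ) :
    ∃ h : C(K,ℝ), ‖h‖ ≤ 1 ∧ 1/2 ≤ θ n h := by
  by_contra hcon
  push_neg at hcon
  have hb : ∀ u : C(K,ℝ), ‖u‖ ≤ 1 → |θ n u| ≤ 1/2 := by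
    intro u hu
    have h1 := hcon u hu
    have h2 : θ n (-u) < 1/2 := hcon (-u) (by rwa [norm_neg])
    rw [map_neg] at h2
    exact abs_le.mpr ⟨by linarith, by linarith⟩
  have hb' : ∀ f : C(K,ℝ), ‖θ n f‖ ≤ 1/2 * ‖f‖ := by
    intro f
    rcases eq_or_ne f 0 with rfl | hf
    · simp
    · have hpos : 0 < ‖f‖ := norm_pos_iff.mpr hf
      have h1 : ‖(‖f‖⁻¹ • f)‖ ≤ 1 := by
        rw [norm_smul (‖f‖⁻¹) f, norm_inv, norm_norm, inv_mul_cancel₀ hpos.ne']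
      have h2 := hb _ h1
      have h3 : θ n f = ‖f‖ * θ n (‖f‖⁻¹ • f) := by
        rw [map_smul, smul_eq_mul, ← mul_assoc, mul_inv_cancel₀ hpos.ne', one_mul]
      rw [Real.norm_eq_abs, h3, abs_mul, abs_of_pos hpos, mul_comm (1/2 : ℝ)]
      exact mul_le_mul_of_nonneg_left h2 hpos.le
  have := (θ n).opNorm_le_bound (by norm_num) hb'
  rw [hθnorm n] at this
  norm_num at this

lemma jmap_pos (h : ℕ → C(K,ℝ)) (hh2 : ∀ n, 1/2 ≤ θ n (h n)) (n : ℕ) :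
    0 < θ n (h n) := lt_of_lt_of_le (by norm_num) (hh2 n)

lemma jmap_bound (h : ℕ → C(K,ℝ)) (hh1 : ∀ n, ‖h n‖ ≤ 1) (hh2 : ∀ n, 1/2 ≤ θ n (h n))
    (a : C₀(ℕ, ℝ)) (n : ℕ) :
    ‖((θ n (h n))⁻¹ * a n) • h n‖ ≤ 2 * |a n| := by
  have hpos := jmap_pos θ h hh2 n
  rw [norm_smul ((θ n (h n))⁻¹ * a n) (h n), Real.norm_eq_abs, abs_mul,
    abs_of_pos (inv_pos.mpr hpos)]
  have hinv : (θ n (h n))⁻¹ ≤ 2 := by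
    rw [show (2:ℝ) = (1/2 : ℝ)⁻¹ by norm_num]
    exact inv_anti₀ (by norm_num) (hh2 n)
  calc (θ n (h n))⁻¹ * |a n| * ‖h n‖ ≤ (θ n (h n))⁻¹ * |a n| * 1 :=
        mul_le_mul_of_nonneg_left (hh1 n)
          (mul_nonneg (inv_pos.mpr hpos).le (abs_nonneg _))
    _ = (θ n (h n))⁻¹ * |a n| := mul_one _
    _ ≤ 2 * |a n| := mul_le_mul_of_nonneg_right hinv (abs_nonneg _)

/-- The operator `J : C₀ → X₊`. -/
def Jmap (h : ℕ → C(K,ℝ)) (hh1 : ∀ n, ‖h n‖ ≤ 1) (hh2 : ∀ n, 1/2 ≤ θ n (h n)) :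
    C₀(ℕ, ℝ) →L[ℝ] ↥(Xplus K Cal) :=
  LinearMap.mkContinuous
    { toFun := fun a => mkX Cal (fun n => ((θ n (h n))⁻¹ * a n) • h n) (2 * ‖a‖)
        (fun n => (jmap_bound θ h hh1 hh2 a n).trans (by
          have := c0_abs_apply_le_norm a n
          nlinarith))
        (by
          refine squeeze_zero (g := fun n => 2 * |a n|) (fun n => Metric.infDist_nonneg)
            (fun n => ?_) ?_
          · refine le_trans (Metric.infDist_le_dist_of_mem (Zspan K Cal).zero_mem) ?_
            rw [dist_zero_right]
            exact jmap_bound θ h hh1 hh2 a n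
          · have := (c0_tendsto a).abs
            simpa using this.const_mul 2)
      map_add' := fun a b => by
        refine Xp_ext Cal (fun n => ?_)
        rw [Xp_add_apply]
        simp only [mkX_coe, ZeroAtInftyContinuousMap.coe_add, Pi.add_apply]
        rw [← add_smul]
        ring_nf
      map_smul' := fun c a => by
        refine Xp_ext Cal (fun n => ?_)
        rw [Xp_smul_apply]
        simp only [mkX_coe, ZeroAtInftyContinuousMap.coe_smul, Pi.smul_apply,
          RingHom.id_apply, smul_eq_mul]
        rw [smul_smul]
        ring_nf }
    2 (fun a => by
      simp only [LinearMap.coe_mk, AddHom.coe_mk]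
      exact mkX_norm_le Cal _ _ _ _ (by positivity))

lemma Jmap_coeff (h : ℕ → C(K,ℝ)) (hh1 : ∀ n, ‖h n‖ ≤ 1) (hh2 : ∀ n, 1/2 ≤ θ n (h n))
    (a : C₀(ℕ, ℝ)) (n : ℕ) :
    θ n ((Jmap Cal θ h hh1 hh2 a : lp (fun _ : ℕ => C(K,ℝ)) ⊤) n) = a n := by
  have hpos := jmap_pos θ h hh2 n
  show θ n ((((θ n (h n))⁻¹ * a n) • h n)) = a n
  rw [map_smul, smul_eq_mul, mul_comm ((θ n (h n))⁻¹), mul_assoc,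
    inv_mul_cancel₀ hpos.ne', mul_one]

lemma Jmap_norm_le (h : ℕ → C(K,ℝ)) (hh1 : ∀ n, ‖h n‖ ≤ 1) (hh2 : ∀ n, 1/2 ≤ θ n (h n))
    (a : C₀(ℕ, ℝ)) : ‖Jmap Cal θ h hh1 hh2 a‖ ≤ 2 * ‖a‖ := by
  have h2 : ‖Jmap Cal θ h hh1 hh2‖ ≤ 2 :=
    LinearMap.mkContinuous_norm_le _ (by norm_num) _
  calc ‖Jmap Cal θ h hh1 hh2 a‖ ≤ ‖Jmap Cal θ h hh1 hh2‖ * ‖a‖ :=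
        (Jmap Cal θ h hh1 hh2).le_opNorm a
    _ ≤ 2 * ‖a‖ := mul_le_mul_of_nonneg_right h2 (norm_nonneg a)

/-- The single point bump in `C₀(ℕ,ℝ)`. -/
def deltaC0 (m : ℕ) : C₀(ℕ, ℝ) where
  toFun := fun n => if n = m then (1:ℝ) else 0
  continuous_toFun := continuous_of_discreteTopology
  zero_at_infty' := by
    rw [cocompact_eq_atTop]
    have h : (fun _ : ℕ => (0:ℝ)) =ᶠ[atTop] (fun n => if n = m then (1:ℝ) else 0) := by
      filter_upwards [eventually_ge_atTop (m + 1)] with n hn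
      rw [if_neg (by omega)]
    exact Tendsto.congr' h tendsto_const_nhds

@[simp] lemma deltaC0_apply (m n : ℕ) : deltaC0 m n = if n = m then (1:ℝ) else 0 := rfl

lemma c0_sum_apply {ι : Type*} (s : Finset ι) (f : ι → C₀(ℕ,ℝ)) (n : ℕ) :
    (∑ i ∈ s, f i) n = ∑ i ∈ s, f i n := by
  classical
  induction s using Finset.induction_on with
  | empty => simp
  | @insert a s ha ih => rw [Finset.sum_insert ha, Finset.sum_insert ha, ← ih]; simp

lemma norm_sum_deltaC0_le (s : Finset ℕ) (ε : ℕ → ℝ) (hε : ∀ m, |ε m| ≤ 1) :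
    ‖∑ m ∈ s, ε m • deltaC0 m‖ ≤ 1 := by
  rw [← ZeroAtInftyContinuousMap.norm_toBCF_eq_norm,
    BoundedContinuousFunction.norm_le zero_le_one]
  intro n
  have hval : (∑ m ∈ s, ε m • deltaC0 m) n = if n ∈ s then ε n else 0 := by
    rw [c0_sum_apply]
    have : ∀ m ∈ s, (ε m • deltaC0 m) n = if m = n then ε m else 0 := by
      intro m _
      simp only [ZeroAtInftyContinuousMap.coe_smul, Pi.smul_apply, deltaC0_apply,
        smul_eq_mul, mul_ite, mul_one, mul_zero]
      simp [eq_comm]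
    rw [Finset.sum_congr rfl this, Finset.sum_ite_eq' s n ε]
  show ‖(∑ m ∈ s, ε m • deltaC0 m) n‖ ≤ 1
  rw [hval]
  split
  · simpa using hε n
  · simp

end xplus_helpers


section more_helpers
set_option linter.unusedSectionVars false
open ZeroAtInfty
variable {K : Type*} [TopologicalSpace K] [CompactSpace K]
variable (Cal : Set (Set K)) (θ : ℕ → C(K,ℝ) →L[ℝ] ℝ)

/-- The coordinate continuous linear map on `X₊`. -/
def coordCLM (n : ℕ) : ↥(Xplus K Cal) →L[ℝ] C(K,ℝ) :=
  LinearMap.mkContinuous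
    { toFun := fun F => (F : lp (fun _ : ℕ => C(K,ℝ)) ⊤) n
      map_add' := fun F G => Xp_add_apply Cal F G n
      map_smul' := fun c F => Xp_smul_apply Cal c F n }
    1 (fun F => by rw [one_mul]; exact Xp_norm_apply_le Cal F n)

@[simp] lemma coordCLM_apply (n : ℕ) (F : ↥(Xplus K Cal)) :
    coordCLM Cal n F = (F : lp (fun _ : ℕ => C(K,ℝ)) ⊤) n := rfl

lemma coeff_abs_le (hθn : ∀ n, ‖θ n‖ ≤ 1) (F : ↥(Xplus K Cal)) (n : ℕ) :
    |θ n ((F : lp (fun _ : ℕ => C(K,ℝ)) ⊤) n)| ≤ ‖F‖ := by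
  calc |θ n ((F : lp (fun _ : ℕ => C(K,ℝ)) ⊤) n)|
      ≤ ‖θ n‖ * ‖(F : lp (fun _ : ℕ => C(K,ℝ)) ⊤) n‖ := (θ n).le_opNorm _
    _ ≤ 1 * ‖F‖ :=
        mul_le_mul (hθn n) (Xp_norm_apply_le Cal F n) (norm_nonneg _) zero_le_one
    _ = ‖F‖ := one_mul _

variable {g : ℕ → C(K,ℝ)}

/-- The operator `Θ : X₊ → C(K,ℝ)`, `F ↦ ∑ θₙ(Fₙ) gₙ`. -/
def thetaCLM (hgdisj : ∀ n m, n ≠ m → g n * g m = 0) (hgnorm : ∀ n, ‖g n‖ = 1)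
    (hθn : ∀ n, ‖θ n‖ ≤ 1) (hθZ : ∀ n, ∀ z ∈ Zspan K Cal, θ n z = 0) :
    ↥(Xplus K Cal) →L[ℝ] C(K,ℝ) :=
  LinearMap.mkContinuous
    { toFun := fun F => sLim g (fun n => θ n ((F : lp (fun _ : ℕ => C(K,ℝ)) ⊤) n))
      map_add' := fun F G => by
        dsimp only
        have ha := coeff_tendsto Cal θ hθn hθZ F
        have hb := coeff_tendsto Cal θ hθn hθZ G
        rw [show (fun n => θ n (((F + G : ↥(Xplus K Cal)) : lp (fun _ : ℕ => C(K,ℝ)) ⊤) n))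
            = (fun n => θ n ((F : lp (fun _ : ℕ => C(K,ℝ)) ⊤) n))
              + (fun n => θ n ((G : lp (fun _ : ℕ => C(K,ℝ)) ⊤) n)) from
          funext fun n => by rw [Xp_add_apply Cal F G n, map_add]; rfl]
        exact sLim_add hgdisj hgnorm ha hb
      map_smul' := fun c F => by
        dsimp only
        have ha := coeff_tendsto Cal θ hθn hθZ F
        rw [show (fun n => θ n (((c • F : ↥(Xplus K Cal)) : lp (fun _ : ℕ => C(K,ℝ)) ⊤) n))
            = c • (fun n => θ n ((F : lp (fun _ : ℕ => C(K,ℝ)) ⊤) n)) from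
          funext fun n => by rw [Xp_smul_apply Cal c F n, map_smul]; rfl]
        exact sLim_smul hgdisj hgnorm c ha }
    1 (fun F => by
      rw [one_mul]
      exact norm_sLim_le hgdisj hgnorm (coeff_tendsto Cal θ hθn hθZ F) (norm_nonneg F)
        (coeff_abs_le Cal θ hθn F))

@[simp] lemma thetaCLM_apply (hgdisj : ∀ n m, n ≠ m → g n * g m = 0)
    (hgnorm : ∀ n, ‖g n‖ = 1)
    (hθn : ∀ n, ‖θ n‖ ≤ 1) (hθZ : ∀ n, ∀ z ∈ Zspan K Cal, θ n z = 0)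
    (F : ↥(Xplus K Cal)) :
    thetaCLM Cal θ hgdisj hgnorm hθn hθZ F
      = sLim g (fun n => θ n ((F : lp (fun _ : ℕ => C(K,ℝ)) ⊤) n)) := rfl

/-- The operator `Λ : C(K,ℝ) → X₊`. -/
def lambdaCLM (x : ℕ → K) (h1 : (1 : C(K,ℝ)) ∈ Zspan K Cal) :
    C(K,ℝ) →L[ℝ] ↥(Xplus K Cal) :=
  LinearMap.mkContinuous
    { toFun := fun f => mkX Cal (fun n => f (x n) • (1 : C(K,ℝ))) ‖f‖
        (fun n => by
          show ‖f (x n) • (1 : C(K,ℝ))‖ ≤ ‖f‖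
          rw [norm_smul (f (x n)) (1 : C(K,ℝ)), Real.norm_eq_abs]
          calc |f (x n)| * ‖(1 : C(K,ℝ))‖ ≤ ‖f‖ * 1 := by
                refine mul_le_mul (f.norm_coe_le_norm (x n)) ?_ (norm_nonneg _) (norm_nonneg f)
                rw [ContinuousMap.norm_le _ zero_le_one]
                intro y; simp
            _ = ‖f‖ := mul_one _)
        (by
          have hz : ∀ n : ℕ, Metric.infDist (f (x n) • (1 : C(K,ℝ)))
              ((Zspan K Cal : Submodule ℝ C(K,ℝ)) : Set C(K,ℝ)) = 0 :=
            fun n => Metric.infDist_zero_of_mem ((Zspan K Cal).smul_mem _ h1)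
          simpa [hz] using tendsto_const_nhds)
      map_add' := fun f₁ f₂ => by
        refine Xp_ext Cal (fun n => ?_)
        rw [Xp_add_apply]
        simp [add_smul]
      map_smul' := fun c f₁ => by
        refine Xp_ext Cal (fun n => ?_)
        rw [Xp_smul_apply]
        simp [smul_smul] }
    1 (fun f => by
      rw [one_mul]
      simp only [LinearMap.coe_mk, AddHom.coe_mk]
      exact mkX_norm_le Cal _ _ _ _ (norm_nonneg f))

lemma lambdaCLM_apply (x : ℕ → K) (h1 : (1 : C(K,ℝ)) ∈ Zspan K Cal) (f : C(K,ℝ)) (n : ℕ) :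
    ((lambdaCLM Cal x h1 f : ↥(Xplus K Cal)) : lp (fun _ : ℕ => C(K,ℝ)) ⊤) n
      = f (x n) • (1 : C(K,ℝ)) := rfl

end more_helpers


section part_lemmas
set_option linter.unusedSectionVars false
open ZeroAtInfty
variable {K : Type*} [TopologicalSpace K] [CompactSpace K]
variable (Cal : Set (Set K)) (θ : ℕ → C(K,ℝ) →L[ℝ] ℝ) {g : ℕ → C(K,ℝ)}

lemma partC [Nonempty K]
    (hgdisj : ∀ n m, n ≠ m → g n * g m = 0) (hgnorm : ∀ n, ‖g n‖ = 1)
    (hθ1 : ∀ n, ‖θ n‖ ≤ 1) (hθZ : ∀ n : ℕ, ∀ z ∈ Zspan K Cal, θ n z = 0)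
    (hf : ℕ → C(K, ℝ)) (hf1 : ∀ n, ‖hf n‖ ≤ 1) (hf2 : ∀ n, 1/2 ≤ θ n (hf n)) :
    Nonempty (↥(LinearMap.range (thetaCLM Cal θ hgdisj hgnorm hθ1 hθZ : ↥(Xplus K Cal) →ₗ[ℝ] C(K,ℝ))) ≃L[ℝ] C₀(ℕ, ℝ)) := by
  classical
  set Θ' := thetaC0 Cal θ hθ1 hθZ with hΘ'def
  set Jm := Jmap Cal θ hf hf1 hf2 with hJmdef
  set Θc := thetaCLM Cal θ hgdisj hgnorm hθ1 hθZ with hΘcdef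
  have hΘJ : ∀ a : C₀(ℕ, ℝ), Θc (Jm a) = sLim g (fun n => a n) := fun a =>
    congrArg (sLim g) (funext fun n => Jmap_coeff Cal θ hf hf1 hf2 a n)
  have hΘJnorm : ∀ a : C₀(ℕ, ℝ), ‖Θc (Jm a)‖ = ‖a‖ := fun a => by
    rw [hΘJ a, sLim_norm_eq hgdisj hgnorm]
  have hmem : ∀ a : C₀(ℕ, ℝ), Θc (Jm a) ∈ LinearMap.range (Θc : ↥(Xplus K Cal) →ₗ[ℝ] C(K,ℝ)) :=
    fun a => LinearMap.mem_range.mpr ⟨Jm a, rfl⟩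
  set l : C₀(ℕ, ℝ) →ₗ[ℝ] ↥(LinearMap.range (Θc : ↥(Xplus K Cal) →ₗ[ℝ] C(K,ℝ))) :=
    LinearMap.codRestrict (LinearMap.range (Θc : ↥(Xplus K Cal) →ₗ[ℝ] C(K,ℝ))) (Θc.comp Jm : _ →L[ℝ] _).toLinearMap hmem
    with hldef
  have hl_apply : ∀ a, ((l a : ↥(LinearMap.range (Θc : ↥(Xplus K Cal) →ₗ[ℝ] C(K,ℝ)))) : C(K,ℝ)) = Θc (Jm a) :=
    fun a => rfl
  have hlinj : Function.Injective l := by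
    intro a b hab
    have h2 : Θc (Jm a) = Θc (Jm b) :=
      congrArg (fun y : ↥(LinearMap.range (Θc : ↥(Xplus K Cal) →ₗ[ℝ] C(K,ℝ))) => (y : C(K,ℝ))) hab
    have h0 : Θc (Jm (a - b)) = 0 := by
      rw [map_sub, map_sub, h2, sub_self]
    have h1 : ‖a - b‖ = 0 := by rw [← hΘJnorm (a - b), h0, norm_zero]
    exact sub_eq_zero.mp (norm_eq_zero.mp h1)
  have hlsurj : Function.Surjective l := by
    rintro ⟨y, hy⟩
    obtain ⟨F, rfl⟩ := LinearMap.mem_range.mp hy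
    refine ⟨Θ' F, ?_⟩
    apply Subtype.ext
    rw [hl_apply]
    rw [hΘJ (Θ' F)]
    show sLim g (fun n => Θ' F n) = Θc F
    rw [hΘcdef, thetaCLM_apply]
    rfl
  set e : C₀(ℕ, ℝ) ≃ₗ[ℝ] ↥(LinearMap.range (Θc : ↥(Xplus K Cal) →ₗ[ℝ] C(K,ℝ))) :=
    LinearEquiv.ofBijective l ⟨hlinj, hlsurj⟩ with hedef
  have he_apply : ∀ a, ((e a : ↥(LinearMap.range (Θc : ↥(Xplus K Cal) →ₗ[ℝ] C(K,ℝ)))) : C(K,ℝ)) = Θc (Jm a) :=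
    fun a => rfl
  have hnm : ∀ a : C₀(ℕ, ℝ), ‖(e a : ↥(LinearMap.range (Θc : ↥(Xplus K Cal) →ₗ[ℝ] C(K,ℝ))))‖ = ‖a‖ := by
    intro a
    rw [Submodule.coe_norm]
    exact hΘJnorm a
  exact ⟨(LinearIsometryEquiv.mk e hnm).symm.toContinuousLinearEquiv⟩

lemma partD (hθ1 : ∀ n, ‖θ n‖ ≤ 1) (hθZ : ∀ n : ℕ, ∀ z ∈ Zspan K Cal, θ n z = 0)
    (hf : ℕ → C(K, ℝ)) (hf1 : ∀ n, ‖hf n‖ ≤ 1) (hf2 : ∀ n, 1/2 ≤ θ n (hf n)) :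
    ∃ P : ↥(Xplus K Cal) →L[ℝ] ↥(Xplus K Cal), P ∘L P = P ∧
      Nonempty (↥(LinearMap.range (P : ↥(Xplus K Cal) →ₗ[ℝ] ↥(Xplus K Cal))) ≃L[ℝ] C₀(ℕ, ℝ)) := by
  classical
  set Θ' := thetaC0 Cal θ hθ1 hθZ with hΘ'def
  set Jm := Jmap Cal θ hf hf1 hf2 with hJmdef
  have hJΘ : ∀ a : C₀(ℕ, ℝ), Θ' (Jm a) = a := fun a =>
    ZeroAtInftyContinuousMap.ext fun n => Jmap_coeff Cal θ hf hf1 hf2 a n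
  set P := Jm.comp Θ' with hPdef
  have hPapp : ∀ F, P F = Jm (Θ' F) := fun F => rfl
  have hPP : ∀ F, P (P F) = P F := fun F => by
    rw [hPapp, hPapp, hJΘ]
  refine ⟨P, ContinuousLinearMap.ext hPP, ?_⟩
  have hmem : ∀ a : C₀(ℕ, ℝ), Jm a ∈ LinearMap.range (P : ↥(Xplus K Cal) →ₗ[ℝ] ↥(Xplus K Cal)) :=
    fun a => LinearMap.mem_range.mpr ⟨Jm a, by show P (Jm a) = Jm a; rw [hPapp, hJΘ]⟩
  set f₁ : ↥(LinearMap.range (P : ↥(Xplus K Cal) →ₗ[ℝ] ↥(Xplus K Cal))) →L[ℝ] C₀(ℕ, ℝ) :=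
    Θ'.comp (LinearMap.range (P : ↥(Xplus K Cal) →ₗ[ℝ] ↥(Xplus K Cal))).subtypeL with hf₁def
  set f₂ : C₀(ℕ, ℝ) →L[ℝ] ↥(LinearMap.range (P : ↥(Xplus K Cal) →ₗ[ℝ] ↥(Xplus K Cal))) :=
    ContinuousLinearMap.codRestrict Jm (LinearMap.range (P : ↥(Xplus K Cal) →ₗ[ℝ] ↥(Xplus K Cal))) hmem with hf₂def
  have h₁ : Function.LeftInverse f₂ f₁ := by
    rintro ⟨y, hy⟩
    obtain ⟨F, rfl⟩ := LinearMap.mem_range.mp hy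
    apply Subtype.ext
    show Jm (Θ' (P F)) = P F
    rw [hPapp, hJΘ]
  have h₂ : Function.RightInverse f₂ f₁ := by
    intro a
    show Θ' (Jm a) = a
    exact hJΘ a
  exact ⟨ContinuousLinearEquiv.equivOfInverse f₁ f₂ h₁ h₂⟩

lemma not_grothendieck_abstract {X : Type*} [NormedAddCommGroup X] [NormedSpace ℝ X]
    (φ : ℕ → X →L[ℝ] ℝ) (w : ℕ → X)
    (hφw : ∀ n m, φ n (w m) = if n = m then (1:ℝ) else 0)
    (hbound : ∀ (s : Finset ℕ) (ε : ℕ → ℝ), (∀ m, |ε m| ≤ 1) → ‖∑ m ∈ s, ε m • w m‖ ≤ 2)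
    (hφnull : ∀ F : X, Tendsto (fun n => φ n F) atTop (𝓝 0)) :
    ¬ IsGrothendieckSpace X := by
  classical
  intro hG
  have hsum : ∀ (ψ : X →L[ℝ] ℝ) (s : Finset ℕ), ∑ m ∈ s, |ψ (w m)| ≤ 2 * ‖ψ‖ := by
    intro ψ s
    set ε : ℕ → ℝ := fun m => if 0 ≤ ψ (w m) then 1 else -1 with hεdef
    have hε1 : ∀ m, |ε m| ≤ 1 := fun m => by
      by_cases h : 0 ≤ ψ (w m) <;> simp [hεdef, h]
    have habs : ∀ m, |ψ (w m)| = ε m * ψ (w m) := by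
      intro m
      by_cases h : 0 ≤ ψ (w m)
      · simp [hεdef, h, abs_of_nonneg h]
      · simp [hεdef, h, abs_of_neg (lt_of_not_ge h), neg_one_mul]
    calc ∑ m ∈ s, |ψ (w m)| = ∑ m ∈ s, ε m * ψ (w m) :=
          Finset.sum_congr rfl (fun m _ => habs m)
      _ = ψ (∑ m ∈ s, ε m • w m) := by
          rw [map_sum]
          exact (Finset.sum_congr rfl fun m _ => by
            rw [map_smul, smul_eq_mul]).symm
      _ ≤ |ψ (∑ m ∈ s, ε m • w m)| := le_abs_self _
      _ ≤ ‖ψ‖ * ‖∑ m ∈ s, ε m • w m‖ := ψ.le_opNorm _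
      _ ≤ ‖ψ‖ * 2 := mul_le_mul_of_nonneg_left (hbound s ε hε1) (norm_nonneg ψ)
      _ = 2 * ‖ψ‖ := by ring
  have hsummable : ∀ ψ : X →L[ℝ] ℝ, Summable (fun m => |ψ (w m)|) :=
    fun ψ => summable_of_sum_range_le (fun m => abs_nonneg _)
      (fun N => hsum ψ (Finset.range N))
  have hsummable' : ∀ ψ : X →L[ℝ] ℝ, Summable (fun m => ψ (w m)) :=
    fun ψ => (hsummable ψ).of_abs
  set Ψ : (X →L[ℝ] ℝ) →L[ℝ] ℝ :=
    LinearMap.mkContinuous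
      { toFun := fun ψ => ∑' m, ψ (w m)
        map_add' := fun ψ χ => by
          simp only [ContinuousLinearMap.add_apply]
          exact Summable.tsum_add (hsummable' ψ) (hsummable' χ)
        map_smul' := fun c ψ => by
          simp only [ContinuousLinearMap.coe_smul', Pi.smul_apply, smul_eq_mul,
            RingHom.id_apply]
          exact tsum_mul_left }
      2 (fun ψ => by
        simp only [LinearMap.coe_mk, AddHom.coe_mk]
        calc ‖∑' m, ψ (w m)‖ ≤ ∑' m, ‖ψ (w m)‖ :=
              norm_tsum_le_tsum_norm (by simpa [Real.norm_eq_abs] using hsummable ψ)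
          _ ≤ 2 * ‖ψ‖ :=
              Real.tsum_le_of_sum_range_le (fun m => norm_nonneg _)
                (fun N => by simpa [Real.norm_eq_abs] using hsum ψ (Finset.range N)))
    with hΨdef
  have hΨφ : ∀ n, Ψ (φ n) = 1 := by
    intro n
    show (∑' m, φ n (w m)) = 1
    have heq : (fun m => φ n (w m)) = fun m => if m = n then (1:ℝ) else 0 := by
      funext m
      rw [hφw]
      simp [eq_comm]
    rw [heq, tsum_ite_eq]
  have h0 := hG φ hφnull Ψ
  rw [show (fun n => Ψ (φ n)) = fun _ => (1:ℝ) from funext hΨφ] at h0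
  have h1 : (0:ℝ) = 1 := tendsto_nhds_unique h0 tendsto_const_nhds
  exact zero_ne_one h1

lemma partE (hθ1 : ∀ n, ‖θ n‖ ≤ 1) (hθZ : ∀ n : ℕ, ∀ z ∈ Zspan K Cal, θ n z = 0)
    (hf : ℕ → C(K, ℝ)) (hf1 : ∀ n, ‖hf n‖ ≤ 1) (hf2 : ∀ n, 1/2 ≤ θ n (hf n)) :
    ¬ IsGrothendieckSpace ↥(Xplus K Cal) := by
  classical
  set Jm := Jmap Cal θ hf hf1 hf2 with hJmdef
  refine not_grothendieck_abstract (fun n => (θ n).comp (coordCLM Cal n))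
    (fun m => Jm (deltaC0 m)) ?_ ?_ ?_
  · intro n m
    exact Jmap_coeff Cal θ hf hf1 hf2 (deltaC0 m) n
  · intro s ε hε
    have hw : ∑ m ∈ s, ε m • Jm (deltaC0 m) = Jm (∑ m ∈ s, ε m • deltaC0 m) := by
      rw [map_sum]
      exact Finset.sum_congr rfl fun m _ => (map_smul Jm (ε m) (deltaC0 m)).symm
    rw [hw]
    calc ‖Jm (∑ m ∈ s, ε m • deltaC0 m)‖
        ≤ 2 * ‖∑ m ∈ s, ε m • deltaC0 m‖ := Jmap_norm_le Cal θ hf hf1 hf2 _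
      _ ≤ 2 := by
          have := norm_sum_deltaC0_le s ε hε
          linarith
  · exact fun F => coeff_tendsto Cal θ hθ1 hθZ F

end part_lemmas

open ZeroAtInfty in
/-- The operators `Λ : C(K) → X₊` and `Θ : X₊ → C(K)` are well defined and bounded; the image
of `Θ` is isomorphic to `c₀`, `X₊` has a complemented copy of `c₀` and `X₊` is not a
Grothendieck space. -/
theorem lambda_theta_operators
    (K : Type*) [TopologicalSpace K] [CompactSpace K] [T2Space K]
    [TotallyDisconnectedSpace K] [TopologicalSpace.SeparableSpace K]
    (hperf : Perfect (Set.univ : Set K))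
    (K₁ K₂ : Set K) (hK₁ : IsClopen K₁) (hK₂ : IsClopen K₂)
    (hdisjK : Disjoint K₁ K₂) (hcover : K₁ ∪ K₂ = Set.univ)
    (hops : ∀ T : C(K, ℝ) →L[ℝ] C(K, ℝ), ∃ g : C(K, ℝ), ∃ S : C(K, ℝ) →L[ℝ] C(K, ℝ),
      IsWeaklyCompactOp S ∧ ∀ f : C(K, ℝ), T f = g * f + S f)
    (hnolinf : ¬ ∃ (T : lp (fun _ : ℕ => ℝ) ⊤ →L[ℝ] C(K, ℝ)) (c : ℝ), 0 < c ∧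
      ∀ f : lp (fun _ : ℕ => ℝ) ⊤, c * ‖f‖ ≤ ‖T f‖)
    (B : Set (Set K)) (hBclopen : ∀ b ∈ B, IsClopen b)
    (hBempty : (∅ : Set K) ∈ B) (hBuniv : (Set.univ : Set K) ∈ B)
    (hBunion : ∀ b ∈ B, ∀ c ∈ B, b ∪ c ∈ B) (hBcompl : ∀ b ∈ B, bᶜ ∈ B)
    (hK₁B : K₁ ∈ B) (hK₂B : K₂ ∈ B)
    (hBdense : ∀ a : Set K, IsClopen a → a.Nonempty → ∃ b ∈ B, b.Nonempty ∧ b ⊆ a)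
    (j : Set K → Set K) (hjB : ∀ b ∈ B, j b ∈ B)
    (hjunion : ∀ b ∈ B, ∀ c ∈ B, j (b ∪ c) = j b ∪ j c)
    (hjcompl : ∀ b ∈ B, j bᶜ = (j b)ᶜ)
    (hjinv : ∀ b ∈ B, j (j b) = b)
    (hjK₁ : j K₁ = K₂)
    (hsup : ∀ a : ℕ → Set K, (∀ n, IsClopen (a n)) →
      (∀ m n, m ≠ n → Disjoint (a m) (a n)) →
      ∃ M : Set ℕ, M.Infinite ∧ ∃ s : Set K, IsClopen s ∧ (∀ n ∈ M, a n ⊆ s) ∧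
        ∀ t : Set K, IsClopen t → (∀ n ∈ M, a n ⊆ t) → s ⊆ t)
    (g : ℕ → C(K, ℝ)) (hgdisj : ∀ n m, n ≠ m → g n * g m = 0) (hgnorm : ∀ n, ‖g n‖ = 1)
    (x : ℕ → K) (hx : DenseRange x)
    (θ : ℕ → C(K, ℝ) →L[ℝ] ℝ) (hθnorm : ∀ n, ‖θ n‖ = 1)
    (hθZ : ∀ n : ℕ, ∀ z ∈ Zspan K {b ∈ B | j b = b}, θ n z = 0) :
    (∃ Λ : C(K, ℝ) →L[ℝ] ↥(Xplus K {b ∈ B | j b = b}),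
      ∀ (f : C(K, ℝ)) (n : ℕ), ((Λ f : lp (fun _ : ℕ => C(K, ℝ)) ⊤) n) = f (x n) • (1 : C(K, ℝ))) ∧
    (∀ F : ↥(Xplus K {b ∈ B | j b = b}), ∃ u : C(K, ℝ),
      Tendsto (fun N => ∑ n ∈ Finset.range N, θ n ((F : lp (fun _ : ℕ => C(K, ℝ)) ⊤) n) • g n) atTop (𝓝 u)) ∧
    (∃ Θ : ↥(Xplus K {b ∈ B | j b = b}) →L[ℝ] C(K, ℝ),
      (∀ F : ↥(Xplus K {b ∈ B | j b = b}),
        Tendsto (fun N => ∑ n ∈ Finset.range N, θ n ((F : lp (fun _ : ℕ => C(K, ℝ)) ⊤) n) • g n) atTop (𝓝 (Θ F))) ∧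
      Nonempty (↥(LinearMap.range (Θ : ↥(Xplus K {b ∈ B | j b = b}) →ₗ[ℝ] C(K, ℝ))) ≃L[ℝ] C₀(ℕ, ℝ))) ∧
    (∃ P : ↥(Xplus K {b ∈ B | j b = b}) →L[ℝ] ↥(Xplus K {b ∈ B | j b = b}), P ∘L P = P ∧
      Nonempty (↥(LinearMap.range (P : ↥(Xplus K {b ∈ B | j b = b}) →ₗ[ℝ] ↥(Xplus K {b ∈ B | j b = b}))) ≃L[ℝ] C₀(ℕ, ℝ))) ∧
    ¬ IsGrothendieckSpace ↥(Xplus K {b ∈ B | j b = b}) := by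
    classical
  have hθ1 : ∀ n, ‖θ n‖ ≤ 1 := fun n => (hθnorm n).le
  -- K is nonempty
  have hKne : Nonempty K := by
    by_contra hempty
    have hg0 : g 0 = 0 := ContinuousMap.ext fun y => absurd (Nonempty.intro y) hempty
    have h10 := hgnorm 0
    rw [hg0] at h10
    simp at h10
  -- the constant function 1 belongs to Z
  have hjK₂ : j K₂ = K₁ := by rw [← hjK₁, hjinv K₁ hK₁B]
  have huniv : Set.univ ∈ {b ∈ B | j b = b} := by
    refine ⟨hBuniv, ?_⟩
    rw [← hcover, hjunion K₁ hK₁B K₂ hK₂B, hjK₁, hjK₂, Set.union_comm]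
  have hone : (1 : C(K,ℝ)) ∈ Zspan K {b ∈ B | j b = b} := by
    apply (Submodule.span ℝ _).le_topologicalClosure
    exact Submodule.subset_span ⟨Set.univ, huniv, fun y => by simp⟩
  -- choose norming elements for the functionals θₙ
  choose hf hf1 hf2 using exists_good_h θ hθnorm
  refine ⟨?_, ?_, ?_, ?_, ?_⟩
  · -- part (a) : Λ
    exact ⟨lambdaCLM {b ∈ B | j b = b} x hone,
      fun f n => lambdaCLM_apply {b ∈ B | j b = b} x hone f n⟩
  · -- part (b) : convergence of the series
    intro F
    exact ⟨sLim g (fun n => θ n ((F : lp (fun _ : ℕ => C(K,ℝ)) ⊤) n)),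
      tendsto_sLim hgdisj hgnorm (coeff_tendsto {b ∈ B | j b = b} θ hθ1 hθZ F)⟩
  · -- part (c) : Θ and its range
    exact ⟨thetaCLM {b ∈ B | j b = b} θ hgdisj hgnorm hθ1 hθZ,
      fun F => tendsto_sLim hgdisj hgnorm (coeff_tendsto {b ∈ B | j b = b} θ hθ1 hθZ F),
      partC {b ∈ B | j b = b} θ hgdisj hgnorm hθ1 hθZ hf hf1 hf2⟩
  · -- part (d) : complemented copy of c₀
    exact partD {b ∈ B | j b = b} θ hθ1 hθZ hf hf1 hf2
  · -- part (e) : X₊ is not a Grothendieck space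
    exact partE {b ∈ B | j b = b} θ hθ1 hθZ hf hf1 hf2
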